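/- Let R be a commutative ring and α, β ∈ R. Then in the formal power series ring R[[u,v]] one has (1 − α(u+v) − α²(β²−1)uv) · ∑_{i,j≥0} ( ∑_{k=0}^{min(i,j)} C(i,k) C(j,k) α^{i+j} β^{2k} ) u^i v^j = 1; that is, the coefficient of u^i v^j in 1/(1 − α(u+v) − α²(β²−1)uv) equals ∑_{k=0}^{min(i,j)} C(i,k) C(j,k) α^{i+j} β^{2k}. -/

import Mathlib

open Finset Matrix

open Finset Matrix

section helpers
variable {R : Type*} [CommRing R] (β : R)

/-- Truncated sum ∑_{k<N} C(i,k) C(j,k) β^{2k}. -/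
noncomputable def bsum (i j N : ℕ) : R :=
  ∑ k ∈ Finset.range N, (Nat.choose i k : R) * (Nat.choose j k : R) * β ^ (2 * k)

lemma bsum_stable (i j N : ℕ) (h : min i j < N) :
    bsum β i j N = bsum β i j (min i j + 1) := by
  unfold bsum
  refine (Finset.sum_subset (Finset.range_subset_range.2 h) ?_).symm
  intro k hk hk'
  simp only [Finset.mem_range, not_lt] at hk hk'
  rcases le_total i j with hij | hij
  · rw [Nat.choose_eq_zero_of_lt (by omega : i < k)]; ring
  · rw [Nat.choose_eq_zero_of_lt (by omega : j < k)]; ring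

lemma key_b (m n : ℕ) :
    bsum β (m+1) (n+1) (min m n + 2) - bsum β m (n+1) (min m n + 2)
      - bsum β (m+1) n (min m n + 2) + bsum β m n (min m n + 2)
      = β ^ 2 * bsum β m n (min m n + 1) := by
  unfold bsum
  rw [← Finset.sum_sub_distrib, ← Finset.sum_sub_distrib, ← Finset.sum_add_distrib,
    Finset.mul_sum]
  have : min m n + 2 = (min m n + 1) + 1 := rfl
  rw [this, Finset.sum_range_succ']
  have h0 : ((Nat.choose (m+1) 0 : R) * (Nat.choose (n+1) 0 : R) * β ^ (2 * 0)
      - (Nat.choose m 0 : R) * (Nat.choose (n+1) 0 : R) * β ^ (2 * 0)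
      - (Nat.choose (m+1) 0 : R) * (Nat.choose n 0 : R) * β ^ (2 * 0)
      + (Nat.choose m 0 : R) * (Nat.choose n 0 : R) * β ^ (2 * 0)) = 0 := by
    simp
  rw [h0, add_zero]
  refine Finset.sum_congr rfl fun k _ => ?_
  have hm : (Nat.choose (m+1) (k+1) : R) = Nat.choose m k + Nat.choose m (k+1) := by
    rw [Nat.choose_succ_succ]; push_cast; ring
  have hn : (Nat.choose (n+1) (k+1) : R) = Nat.choose n k + Nat.choose n (k+1) := by
    rw [Nat.choose_succ_succ]; push_cast; ring
  rw [hm, hn]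
  have : 2 * (k + 1) = 2 * k + 2 := by ring
  rw [this, pow_add]
  ring

end helpers

/-- The key scalar identity. -/
lemma key_scalar {R : Type*} [CommRing R] (α β : R) (i j : ℕ)
    (f : ℕ → ℕ → R)
    (hf : ∀ i j, f i j = α ^ (i + j) * bsum β i j (min i j + 1)) :
    f i j - (if 1 ≤ i then α * f (i-1) j else 0) - (if 1 ≤ j then α * f i (j-1) else 0)
      - (if 1 ≤ i ∧ 1 ≤ j then α ^ 2 * (β ^ 2 - 1) * f (i-1) (j-1) else 0)
      = if i = 0 ∧ j = 0 then 1 else 0 := by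
  rcases i with _ | m <;> rcases j with _ | n
  · simp [hf, bsum]
  · simp only [Nat.le_zero, Nat.succ_ne_zero, and_false, if_false, Nat.le_add_left,
      if_true, if_pos (by omega : 1 ≤ n + 1), hf]
    norm_num
    have h1 : bsum β 0 (n+1) 1 = 1 := by simp [bsum]
    have h2 : bsum β 0 n 1 = 1 := by simp [bsum]
    rw [h1, h2]; ring
  · simp only [Nat.le_zero, Nat.succ_ne_zero, false_and, and_false, if_false,
      if_pos (by omega : 1 ≤ m + 1), hf]
    norm_num
    have h1 : bsum β (m+1) 0 1 = 1 := by simp [bsum]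
    have h2 : bsum β m 0 1 = 1 := by simp [bsum]
    rw [h1, h2]; ring
  · simp only [if_pos (by omega : 1 ≤ m + 1), if_pos (by omega : 1 ≤ n + 1),
      and_self, if_true, Nat.succ_ne_zero, false_and, if_false, Nat.add_sub_cancel, hf]
    have e1 : bsum β (m+1) (n+1) (min (m+1) (n+1) + 1) = bsum β (m+1) (n+1) (min m n + 2) :=
      ((bsum_stable β (m+1) (n+1) (min m n + 2) (by omega)).symm).trans rfl |>.symm.symm
    have e2 : bsum β m (n+1) (min m (n+1) + 1) = bsum β m (n+1) (min m n + 2) :=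
      (bsum_stable β m (n+1) (min m n + 2) (by omega)).symm
    have e3 : bsum β (m+1) n (min (m+1) n + 1) = bsum β (m+1) n (min m n + 2) :=
      (bsum_stable β (m+1) n (min m n + 2) (by omega)).symm
    have e4 : bsum β m n (min m n + 2) = bsum β m n (min m n + 1) :=
      bsum_stable β m n (min m n + 2) (by omega)
    rw [e1, e2, e3, if_pos (⟨by omega, by omega⟩ : (1:ℕ) ≤ m + 1 ∧ 1 ≤ n + 1)]
    have key := key_b β m n
    rw [e4] at key
    linear_combination (α ^ (m + n + 2)) * key

/-- The formal power series in R[[u,v]] whose coefficient of uⁱvʲ is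
∑_{k=0}^{min(i,j)} C(i,k) C(j,k) α^{i+j} β^{2k}; here the variable u is X 0 and
v is X 1, and the coefficient at the monomial d is read off from i = d 0, j = d 1. -/
noncomputable def seriesLLt {R : Type*} [CommRing R] (α β : R) :
    MvPowerSeries (Fin 2) R :=
  fun d =>
    ∑ k ∈ Finset.range (min (d 0) (d 1) + 1),
      (Nat.choose (d 0) k : R) * (Nat.choose (d 1) k : R) * α ^ (d 0 + d 1) * β ^ (2 * k)

/-- In R[[u,v]] one has
(1 − α(u+v) − α²(β²−1)uv) · ∑_{i,j≥0} (∑_{k=0}^{min(i,j)} C(i,k) C(j,k) α^{i+j} β^{2k}) uⁱvʲ = 1,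
where u = X 0 and v = X 1. -/
theorem one_sub_mul_series_eq_one {R : Type*} [CommRing R] (α β : R) :
    ((1 : MvPowerSeries (Fin 2) R)
        - MvPowerSeries.C (σ := Fin 2) (R := R) α * (MvPowerSeries.X 0 + MvPowerSeries.X 1)
        - MvPowerSeries.C (σ := Fin 2) (R := R) (α ^ 2 * (β ^ 2 - 1)) *
            (MvPowerSeries.X 0 * MvPowerSeries.X 1)) * seriesLLt α β = 1 := by
  classical
  set e0 : Fin 2 →₀ ℕ := Finsupp.single 0 1 with he0
  set e1 : Fin 2 →₀ ℕ := Finsupp.single 1 1 with he1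
  have hfac : ((1 : MvPowerSeries (Fin 2) R)
        - MvPowerSeries.C (σ := Fin 2) (R := R) α * (MvPowerSeries.X 0 + MvPowerSeries.X 1)
        - MvPowerSeries.C (σ := Fin 2) (R := R) (α ^ 2 * (β ^ 2 - 1)) *
            (MvPowerSeries.X 0 * MvPowerSeries.X 1))
      = 1 - MvPowerSeries.monomial (R := R) e0 α - MvPowerSeries.monomial (R := R) e1 α
          - MvPowerSeries.monomial (R := R) (e0 + e1) (α ^ 2 * (β ^ 2 - 1)) := by
    rw [MvPowerSeries.X_def, MvPowerSeries.X_def, ← MvPowerSeries.monomial_zero_eq_C_apply,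
      ← MvPowerSeries.monomial_zero_eq_C_apply]
    simp only [MvPowerSeries.monomial_mul_monomial, mul_add, one_mul, mul_one, zero_add]
    ring_nf
    rfl
  rw [hfac]
  apply MvPowerSeries.ext
  intro d
  have hS : ∀ d' : Fin 2 →₀ ℕ, MvPowerSeries.coeff (R := R) d' (seriesLLt α β)
      = α ^ (d' 0 + d' 1) * bsum β (d' 0) (d' 1) (min (d' 0) (d' 1) + 1) := by
    intro d'
    rw [MvPowerSeries.coeff_apply]
    show (∑ k ∈ Finset.range _, _) = _
    rw [bsum, Finset.mul_sum]
    exact Finset.sum_congr rfl fun k _ => by ring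
  have hd00 : (d - e0) 0 = d 0 - 1 := by simp [he0, Finsupp.tsub_apply]
  have hd01 : (d - e0) 1 = d 1 := by simp [he0, Finsupp.tsub_apply]
  have hd10 : (d - e1) 0 = d 0 := by simp [he1, Finsupp.tsub_apply]
  have hd11 : (d - e1) 1 = d 1 - 1 := by simp [he1, Finsupp.tsub_apply]
  have hdb0 : (d - (e0 + e1)) 0 = d 0 - 1 := by simp [he0, he1, Finsupp.tsub_apply]
  have hdb1 : (d - (e0 + e1)) 1 = d 1 - 1 := by simp [he0, he1, Finsupp.tsub_apply]
  have hle0 : e0 ≤ d ↔ 1 ≤ d 0 := Finsupp.single_le_iff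
  have hle1 : e1 ≤ d ↔ 1 ≤ d 1 := Finsupp.single_le_iff
  have hleb : e0 + e1 ≤ d ↔ 1 ≤ d 0 ∧ 1 ≤ d 1 := by
    rw [Finsupp.le_def]
    constructor
    · intro h
      refine ⟨le_trans ?_ (h 0), le_trans ?_ (h 1)⟩ <;> simp [he0, he1]
    · rintro ⟨h0, h1⟩ s
      fin_cases s <;> simpa [he0, he1]
  have hdz : d = 0 ↔ d 0 = 0 ∧ d 1 = 0 := by
    constructor
    · rintro rfl; simp
    · rintro ⟨h0, h1⟩
      ext s; fin_cases s <;> simpa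
  simp only [sub_mul, one_mul, map_sub, MvPowerSeries.coeff_monomial_mul,
    MvPowerSeries.coeff_one]
  rw [hS d, hS (d - e0), hS (d - e1), hS (d - (e0 + e1)), hd00, hd01, hd10, hd11, hdb0, hdb1]
  have key := key_scalar α β (d 0) (d 1)
    (fun i j => α ^ (i + j) * bsum β i j (min i j + 1)) (fun _ _ => rfl)
  rw [show (if d = 0 then (1:R) else 0) = (if d 0 = 0 ∧ d 1 = 0 then (1:R) else 0) from by
    simp only [hdz]]
  rw [show (if e0 ≤ d then α * (α ^ (d 0 - 1 + d 1) * bsum β (d 0 - 1) (d 1) (min (d 0 - 1) (d 1) + 1)) else 0)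
      = (if 1 ≤ d 0 then α * (α ^ (d 0 - 1 + d 1) * bsum β (d 0 - 1) (d 1) (min (d 0 - 1) (d 1) + 1)) else 0) from by
    simp only [hle0]]
  rw [show (if e1 ≤ d then α * (α ^ (d 0 + (d 1 - 1)) * bsum β (d 0) (d 1 - 1) (min (d 0) (d 1 - 1) + 1)) else 0)
      = (if 1 ≤ d 1 then α * (α ^ (d 0 + (d 1 - 1)) * bsum β (d 0) (d 1 - 1) (min (d 0) (d 1 - 1) + 1)) else 0) from by
    simp only [hle1]]
  rw [show (if e0 + e1 ≤ d then α ^ 2 * (β ^ 2 - 1) * (α ^ (d 0 - 1 + (d 1 - 1)) * bsum β (d 0 - 1) (d 1 - 1) (min (d 0 - 1) (d 1 - 1) + 1)) else 0)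
      = (if 1 ≤ d 0 ∧ 1 ≤ d 1 then α ^ 2 * (β ^ 2 - 1) * (α ^ (d 0 - 1 + (d 1 - 1)) * bsum β (d 0 - 1) (d 1 - 1) (min (d 0 - 1) (d 1 - 1) + 1)) else 0) from by
    simp only [hleb]]
  exact key
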